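/- arXiv:1509.09161 — 3 statements merged into one kernel-verified Lean document; each statement's English description precedes it below -/
import Mathlib

section
/- For the generalized Lorenz system with b = 1, the function W(x,y,z) = y² + z² − 2rz satisfies Ẇ = −2(y² + z² − 2rz) − 2rz along trajectories; hence on the set {z ≥ 0}, Ẇ ≤ −2W, and hence the set Ω = {(x,y,z) : y² + z² ≤ 2rz} is positively invariant. -/
/-- For the generalized Lorenz system with b = 1, W = y² + z² − 2rz satisfies
Ẇ = −2W − 2rz along trajectories, hence Ẇ ≤ −2W on {z ≥ 0}, and the set
Ω = {y² + z² ≤ 2rz} is positively invariant. -/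
theorem gd_omega_positively_invariant
    (σ r A : ℝ) (hσ : 0 < σ) (hr : 0 < r) (hA : 0 < A) :
    (∀ x y z : ℝ,
      2 * y * (r * x - y - x * z) + (2 * z - 2 * r) * (-z + x * y) =
        -2 * (y ^ 2 + z ^ 2 - 2 * r * z) - 2 * r * z) ∧
    (∀ x y z : ℝ, 0 ≤ z →
      2 * y * (r * x - y - x * z) + (2 * z - 2 * r) * (-z + x * y) ≤
        -2 * (y ^ 2 + z ^ 2 - 2 * r * z)) ∧
    (∀ x y z : ℝ → ℝ,
      (∀ t, HasDerivAt x (-σ * x t + σ * y t - A * y t * z t) t) →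
      (∀ t, HasDerivAt y (r * x t - y t - x t * z t) t) →
      (∀ t, HasDerivAt z (-z t + x t * y t) t) →
      y 0 ^ 2 + z 0 ^ 2 ≤ 2 * r * z 0 →
      ∀ t ≥ (0:ℝ), y t ^ 2 + z t ^ 2 ≤ 2 * r * z t) := by
  refine ⟨fun x y z => by ring, fun x y z hz => by nlinarith, ?_⟩
  intro x y z hx hy hz h0 t ht
  -- g t = W t * exp t is antitone, where W = y² + z² - 2rz
  set g : ℝ → ℝ := fun t => (y t ^ 2 + z t ^ 2 - 2 * r * z t) * Real.exp t with hg
  have hgd : ∀ t, HasDerivAt g (-(y t ^ 2 + z t ^ 2) * Real.exp t) t := by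
    intro t
    have hW : HasDerivAt (fun t => y t ^ 2 + z t ^ 2 - 2 * r * z t)
        (2 * y t * (r * x t - y t - x t * z t) + (2 * z t - 2 * r) * (-z t + x t * y t)) t := by
      have h1 := ((hy t).pow 2).add ((hz t).pow 2)
      have h2 := (hz t).const_mul (2 * r)
      have := h1.sub h2
      refine this.congr_deriv ?_
      ring
    have := hW.mul (Real.hasDerivAt_exp t)
    refine this.congr_deriv ?_
    ring
  have hanti : Antitone g := by
    apply antitone_of_deriv_nonpos
    · intro t; exact (hgd t).differentiableAt
    · intro t
      rw [(hgd t).deriv]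
      have := Real.exp_pos t
      nlinarith [sq_nonneg (y t), sq_nonneg (z t)]
  have hle : g t ≤ g 0 := hanti ht
  have hg0 : g 0 ≤ 0 := by
    simp only [hg, Real.exp_zero, mul_one]
    linarith
  have : (y t ^ 2 + z t ^ 2 - 2 * r * z t) * Real.exp t ≤ 0 := le_trans hle hg0
  nlinarith [Real.exp_pos t]
end

section
/- If r > 1 and σ, A, b > 0, then with ξ = (σb/(2A²))(A(r−2) − σ + √((Ar−σ)² + 4Aσ)), the points S₁,₂ = (±σb√ξ/(σb+Aξ), ±√ξ, σξ/(σb+Aξ)) are equilibria of the generalized Lorenz system; in particular ξ > 0. -/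
/-- For r > 1, the points S₁,₂ = (±σb√ξ/(σb+Aξ), ±√ξ, σξ/(σb+Aξ)) with
ξ = (σb/(2A²))(A(r−2) − σ + √((Ar−σ)² + 4Aσ)) are equilibria of the
generalized Lorenz system; in particular ξ > 0. -/
theorem gd_nontrivial_equilibria
    (σ r A b : ℝ) (hσ : 0 < σ) (hA : 0 < A) (hb : 0 < b) (hr : 1 < r)
    (ξ x₁ y₁ z₁ : ℝ)
    (hξ : ξ = (σ * b / (2 * A ^ 2)) *
      (A * (r - 2) - σ + Real.sqrt ((A * r - σ) ^ 2 + 4 * A * σ)))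
    (hx₁ : x₁ = σ * b * Real.sqrt ξ / (σ * b + A * ξ))
    (hy₁ : y₁ = Real.sqrt ξ)
    (hz₁ : z₁ = σ * ξ / (σ * b + A * ξ)) :
    0 < ξ ∧
    (-σ * x₁ + σ * y₁ - A * y₁ * z₁ = 0 ∧
      r * x₁ - y₁ - x₁ * z₁ = 0 ∧ -b * z₁ + x₁ * y₁ = 0) ∧
    (-σ * (-x₁) + σ * (-y₁) - A * (-y₁) * z₁ = 0 ∧
      r * (-x₁) - (-y₁) - (-x₁) * z₁ = 0 ∧ -b * z₁ + (-x₁) * (-y₁) = 0) := by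
  set s := Real.sqrt ((A * r - σ) ^ 2 + 4 * A * σ) with hs
  have harg : (0:ℝ) ≤ (A * r - σ) ^ 2 + 4 * A * σ := by positivity
  have hs2 : s ^ 2 = (A * r - σ) ^ 2 + 4 * A * σ := Real.sq_sqrt harg
  have hs0 : 0 ≤ s := Real.sqrt_nonneg _
  have hkey : s ^ 2 - (A * (r - 2) - σ) ^ 2 = 4 * A ^ 2 * (r - 1) := by
    rw [hs2]; ring
  have hsc : s ^ 2 > (A * (r - 2) - σ) ^ 2 := by
    have := mul_pos (pow_pos hA 2) (sub_pos.2 hr); nlinarith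
  have hcs : 0 < A * (r - 2) - σ + s := by nlinarith [hsc, hs0]
  have hξpos : 0 < ξ := by
    rw [hξ]; positivity
  have hD : 0 < σ * b + A * ξ := by positivity
  have hDne : σ * b + A * ξ ≠ 0 := ne_of_gt hD
  have h2 : 2 * A ^ 2 * ξ = σ * b * (A * (r - 2) - σ + s) := by
    rw [hξ]; field_simp
  have hq : A ^ 2 * ξ ^ 2 = σ * b * (A * (r - 2) - σ) * ξ + σ ^ 2 * b ^ 2 * (r - 1) := by
    have h4 : (2 * A ^ 2 * ξ) ^ 2 = (σ * b * (A * (r - 2) - σ + s)) ^ 2 := by rw [h2]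
    have hA2 : (4 * A ^ 2 : ℝ) ≠ 0 := by positivity
    apply mul_left_cancel₀ hA2
    linear_combination h4 - (2 * σ * b * (A * (r - 2) - σ)) * h2 + (1) * σ ^ 2 * b ^ 2 * hs2
  have hy2 : Real.sqrt ξ ^ 2 = ξ := Real.sq_sqrt hξpos.le
  have hy2m : Real.sqrt ξ * Real.sqrt ξ = ξ := Real.mul_self_sqrt hξpos.le
  refine ⟨hξpos, ⟨?_, ?_, ?_⟩, ⟨?_, ?_, ?_⟩⟩ <;> rw [hx₁, hy₁, hz₁] <;> field_simp
  · ring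
  · linear_combination ((-1) * Real.sqrt ξ) * hq
  · linear_combination (b * σ) * hy2
  · ring
  · linear_combination ((1) * Real.sqrt ξ) * hq
  · linear_combination (σ * b) * hy2m
end

section
/- Let σ > 0, A > 0, b > 0, r > 1. The system 0 < γ₂ ≤ (σ+Ar)/(2(r−1)b), max{1/(2b) − γ₂/A, Γ₋(γ₂)} ≤ γ₁ ≤ Γ₊(γ₂) has a solution (γ₁, γ₂) ∈ ℝ². -/
/-- Solvability of the system of inequalities for (γ₁, γ₂). -/
theorem gamma_system_solvable
    (σ A b r : ℝ) (hσ : 0 < σ) (hA : 0 < A) (hb : 0 < b) (hr : 1 < r) :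
    ∃ γ₁ γ₂ : ℝ,
      0 < γ₂ ∧ γ₂ ≤ (σ + A * r) / (2 * (r - 1) * b) ∧
      max (1 / (2 * b) - γ₂ / A)
          ((1 / σ) * (γ₂ * (2 - r) + (σ + A * r) / (2 * b) -
            Real.sqrt (2 * γ₂ * (2 * (1 - r) * γ₂ + (σ + A * r) / b)))) ≤ γ₁ ∧
      γ₁ ≤ (1 / σ) * (γ₂ * (2 - r) + (σ + A * r) / (2 * b) +
        Real.sqrt (2 * γ₂ * (2 * (1 - r) * γ₂ + (σ + A * r) / b))) := by
  have hr1 : (0:ℝ) < r - 1 := by linarith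
  have hS : 0 < σ + A * r := by nlinarith
  set γ₂ : ℝ := (σ + A * r) / (2 * (r - 1) * b) with hγ₂
  have hden : (0:ℝ) < 2 * (r - 1) * b := by positivity
  have hγ₂pos : 0 < γ₂ := div_pos hS hden
  have harg : 2 * γ₂ * (2 * (1 - r) * γ₂ + (σ + A * r) / b) = 0 := by
    rw [hγ₂]; field_simp; ring
  refine ⟨(1 / σ) * (γ₂ * (2 - r) + (σ + A * r) / (2 * b)), γ₂, hγ₂pos, le_refl _, ?_, ?_⟩
  · rw [harg, Real.sqrt_zero]
    refine max_le ?_ (by simp)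
    have h1 : (1 / σ) * ((σ + A * r) / (2 * (r - 1) * b) * (2 - r) + (σ + A * r) / (2 * b))
        = (σ + A * r) / (2 * b * (r - 1) * σ) := by field_simp; ring
    rw [hγ₂, div_div, h1,
      div_sub_div _ _ (by positivity : (2*b:ℝ) ≠ 0) (by positivity : (2*(r-1)*b*A:ℝ) ≠ 0),
      div_le_div_iff₀ (by positivity) (by positivity)]
    nlinarith [mul_pos (mul_pos (mul_pos hb hb) hr1) (mul_pos hS hA),
      mul_pos (mul_pos (mul_pos (mul_pos hb hb) hr1) hσ) (by linarith : (0:ℝ) < A + σ)]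
  · rw [harg, Real.sqrt_zero]; simp
end
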